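/- Fix a real number p. The sequence c_l := (√((l+1)(l+2)(l+3)(l+4))/4)·[2((2l+5)/(2l+1))^{2p} − 1 − ((2l+9)/(2l+1))^{2p}], l ∈ ℤ_{≥0}, is bounded. -/

import Mathlib

open Real Set

private lemma aux_pow_le {x s : ℝ} (hx1 : 1 ≤ x) (hx9 : x ≤ 9) : x ^ s ≤ 9 ^ |s| := by
  rcases le_or_gt 0 s with h | h
  · rw [abs_of_nonneg h]
    exact Real.rpow_le_rpow (by linarith) hx9 h
  · calc x ^ s ≤ 1 := Real.rpow_le_one_of_one_le_of_nonpos hx1 h.le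
      _ = (9:ℝ) ^ (0:ℝ) := by rw [Real.rpow_zero]
      _ ≤ 9 ^ |s| := Real.rpow_le_rpow_of_exponent_le (by norm_num) (abs_nonneg s)

private lemma rpow_Icc_lip {r : ℝ} {u v : ℝ} (hu : u ∈ Set.Icc (1:ℝ) 9)
    (hv : v ∈ Set.Icc (1:ℝ) 9) :
    |u ^ r - v ^ r| ≤ (|r| * 9 ^ |r - 1|) * |u - v| := by
  have hderiv : ∀ x ∈ Set.Icc (1:ℝ) 9,
      HasDerivWithinAt (fun x : ℝ => x ^ r) (r * x ^ (r - 1)) (Set.Icc (1:ℝ) 9) x := by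
    intro x hx
    exact (Real.hasDerivAt_rpow_const (Or.inl (by linarith [hx.1]))).hasDerivWithinAt
  have hbound : ∀ x ∈ Set.Icc (1:ℝ) 9, ‖r * x ^ (r - 1)‖ ≤ |r| * 9 ^ |r - 1| := by
    intro x hx
    rw [norm_mul, Real.norm_eq_abs, Real.norm_eq_abs,
      abs_of_nonneg (Real.rpow_nonneg (by linarith [hx.1]) _)]
    have := aux_pow_le hx.1 hx.2 (s := r - 1)
    have : x ^ (r - 1) ≤ 9 ^ |r - 1| := this
    nlinarith [abs_nonneg r]
  have := (convex_Icc (1:ℝ) 9).norm_image_sub_le_of_norm_hasDerivWithin_le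
    hderiv hbound hv hu
  simpa [Real.norm_eq_abs] using this

private lemma second_diff {q h : ℝ} (h0 : 0 ≤ h) (h4 : h ≤ 4) :
    |2 * (1 + h) ^ q - 1 - (1 + 2 * h) ^ q| ≤ (|q| * (|q - 1| * 9 ^ |q - 2|)) * h ^ 2 := by
  set D : ℝ → ℝ := fun t => (1 + t + h) ^ q - (1 + t) ^ q with hD
  have hderiv : ∀ t ∈ Set.Icc (0:ℝ) h,
      HasDerivWithinAt D (q * (1 + t + h) ^ (q - 1) - q * (1 + t) ^ (q - 1))
        (Set.Icc (0:ℝ) h) t := by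
    intro t ht
    have h1 : HasDerivAt (fun t : ℝ => (1 + t + h) ^ q) (q * (1 + t + h) ^ (q - 1)) t := by
      have := (Real.hasDerivAt_rpow_const (x := 1 + t + h) (p := q)
        (Or.inl (by nlinarith [ht.1]))).comp t
        ((hasDerivAt_id t).const_add 1 |>.add_const h)
      simpa [mul_comm, Function.comp_def] using this
    have h2 : HasDerivAt (fun t : ℝ => (1 + t) ^ q) (q * (1 + t) ^ (q - 1)) t := by
      have := (Real.hasDerivAt_rpow_const (x := 1 + t) (p := q)
        (Or.inl (by nlinarith [ht.1]))).comp t ((hasDerivAt_id t).const_add 1)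
      simpa [mul_comm, Function.comp_def] using this
    exact (h1.sub h2).hasDerivWithinAt
  have hbound : ∀ t ∈ Set.Icc (0:ℝ) h,
      ‖q * (1 + t + h) ^ (q - 1) - q * (1 + t) ^ (q - 1)‖
        ≤ (|q| * (|q - 1| * 9 ^ |q - 2|)) * h := by
    intro t ht
    rw [Real.norm_eq_abs, ← mul_sub, abs_mul]
    have hu : 1 + t + h ∈ Set.Icc (1:ℝ) 9 := ⟨by linarith [ht.1], by linarith [ht.2]⟩
    have hv : 1 + t ∈ Set.Icc (1:ℝ) 9 := ⟨by linarith [ht.1], by linarith [ht.2]⟩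
    have hl := rpow_Icc_lip (r := q - 1) hu hv
    have habs : |(1 + t + h) - (1 + t)| = h := by rw [abs_of_nonneg (by linarith)]; ring
    rw [habs] at hl
    have h21 : |q - 1 - 1| = |q - 2| := by ring_nf
    rw [h21] at hl
    calc |q| * |(1 + t + h) ^ (q - 1) - (1 + t) ^ (q - 1)|
        ≤ |q| * ((|q - 1| * 9 ^ |q - 2|) * h) := by
          exact mul_le_mul_of_nonneg_left hl (abs_nonneg q)
      _ = (|q| * (|q - 1| * 9 ^ |q - 2|)) * h := by ring
  have key := (convex_Icc (0:ℝ) h).norm_image_sub_le_of_norm_hasDerivWithin_le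
    hderiv hbound (Set.left_mem_Icc.mpr h0) (Set.right_mem_Icc.mpr h0)
  have hDh : D h - D 0 = -(2 * (1 + h) ^ q - 1 - (1 + 2 * h) ^ q) := by
    simp only [hD]
    rw [show (1:ℝ) + h + h = 1 + 2 * h by ring, show (1:ℝ) + 0 + h = 1 + h by ring,
      show (1:ℝ) + 0 = 1 by ring, Real.one_rpow]
    ring
  rw [hDh, Real.norm_eq_abs, Real.norm_eq_abs, abs_neg, sub_zero, abs_of_nonneg h0] at key
  calc |2 * (1 + h) ^ q - 1 - (1 + 2 * h) ^ q|
      ≤ |q| * (|q - 1| * 9 ^ |q - 2|) * h * h := key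
    _ = (|q| * (|q - 1| * 9 ^ |q - 2|)) * h ^ 2 := by ring

theorem c_seq_bounded (p : ℝ) :
    ∃ C : ℝ, ∀ l : ℕ,
      |Real.sqrt (((l : ℝ) + 1) * (l + 2) * (l + 3) * (l + 4)) / 4 *
          (2 * ((2 * (l : ℝ) + 5) / (2 * l + 1)) ^ (2 * p) - 1
            - ((2 * (l : ℝ) + 9) / (2 * l + 1)) ^ (2 * p))| ≤ C := by
  set M : ℝ := |2 * p| * (|2 * p - 1| * 9 ^ |2 * p - 2|) with hM
  have hM0 : 0 ≤ M := by positivity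
  refine ⟨64 * M, fun l => ?_⟩
  set n : ℝ := (l : ℝ) with hn
  have hn0 : 0 ≤ n := Nat.cast_nonneg l
  have hd : (0:ℝ) < 2 * n + 1 := by linarith
  set h : ℝ := 4 / (2 * n + 1) with hh
  have h0 : 0 ≤ h := by positivity
  have h4 : h ≤ 4 := by
    rw [hh, div_le_iff₀ hd]; nlinarith
  have e1 : (2 * n + 5) / (2 * n + 1) = 1 + h := by
    rw [hh]; field_simp; ring
  have e2 : (2 * n + 9) / (2 * n + 1) = 1 + 2 * h := by
    rw [hh]; field_simp; ring
  rw [e1, e2, abs_mul]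
  have hsq : Real.sqrt ((n + 1) * (n + 2) * (n + 3) * (n + 4)) ≤ (n + 4) ^ 2 := by
    rw [show ((n + 4):ℝ) ^ 2 = Real.sqrt (((n + 4) ^ 2) ^ 2) from
      (Real.sqrt_sq (by positivity)).symm]
    apply Real.sqrt_le_sqrt; nlinarith
  have h1 : |Real.sqrt ((n + 1) * (n + 2) * (n + 3) * (n + 4)) / 4| ≤ (n + 4) ^ 2 / 4 := by
    rw [abs_of_nonneg (by positivity)]; linarith
  have hsd := second_diff (q := 2 * p) h0 h4
  have hk : h * (n + 4) ≤ 16 := by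
    rw [hh, div_mul_eq_mul_div, div_le_iff₀ hd]; nlinarith
  have key2 : (n + 4) ^ 2 * h ^ 2 ≤ 256 := by
    nlinarith [mul_nonneg h0 (show (0:ℝ) ≤ n + 4 by linarith), hk]
  calc |Real.sqrt ((n + 1) * (n + 2) * (n + 3) * (n + 4)) / 4| *
        |2 * (1 + h) ^ (2 * p) - 1 - (1 + 2 * h) ^ (2 * p)|
      ≤ ((n + 4) ^ 2 / 4) * (M * h ^ 2) := by
        exact mul_le_mul h1 hsd (abs_nonneg _) (by positivity)
    _ ≤ 64 * M := by nlinarith [mul_le_mul_of_nonneg_left key2 hM0]
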